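/- arXiv:2510.11354 — 2 statements merged into one kernel-verified Lean document; each statement's English description precedes it below -/
import Mathlib

section
/- Let β₁, β₂ ∈ [0, 1) with β₁² < β₂, let t ≥ 1, and let g₀, …, g_{t−1} ∈ ℝ. Define m = Σ_{τ=0}^{t−1} β₁^τ (1 − β₁) g_τ and v = Σ_{τ=0}^{t−1} β₂^τ (1 − β₂) g_τ². Then m² ≤ C · v, where C = (1 − β₁)² / ((1 − β₂)(1 − β₁²/β₂)). Consequently, for every ε > 0, |m| / (√v + ε) ≤ √C. -/
/-- For Adam momentum estimates
`m = Σ_{τ<t} β₁^τ (1−β₁) g_τ` and `v = Σ_{τ<t} β₂^τ (1−β₂) g_τ²` with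
`β₁, β₂ ∈ [0,1)`, `β₁² < β₂`, one has `m² ≤ C·v` with
`C = (1−β₁)²/((1−β₂)(1−β₁²/β₂))`, and hence `|m|/(√v + ε) ≤ √C` for every `ε > 0`. -/
theorem adam_momentum_ratio_bound (β1 β2 : ℝ)
    (hβ1_nonneg : 0 ≤ β1) (hβ1_lt : β1 < 1) (hβ2_nonneg : 0 ≤ β2) (hβ2_lt : β2 < 1)
    (hβ12 : β1 ^ 2 < β2) (t : ℕ) (ht : 1 ≤ t) (g : ℕ → ℝ) :
    (∑ τ ∈ Finset.range t, β1 ^ τ * (1 - β1) * g τ) ^ 2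
      ≤ ((1 - β1) ^ 2 / ((1 - β2) * (1 - β1 ^ 2 / β2))) *
        (∑ τ ∈ Finset.range t, β2 ^ τ * (1 - β2) * g τ ^ 2) ∧
    ∀ ε > (0 : ℝ),
      |∑ τ ∈ Finset.range t, β1 ^ τ * (1 - β1) * g τ| /
          (Real.sqrt (∑ τ ∈ Finset.range t, β2 ^ τ * (1 - β2) * g τ ^ 2) + ε)
        ≤ Real.sqrt ((1 - β1) ^ 2 / ((1 - β2) * (1 - β1 ^ 2 / β2))) := by
  have hβ2_pos : 0 < β2 := lt_of_le_of_lt (sq_nonneg β1) hβ12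
  set r : ℝ := β1 ^ 2 / β2 with hr_def
  have hr_nonneg : 0 ≤ r := div_nonneg (sq_nonneg _) hβ2_pos.le
  have hr_lt : r < 1 := (div_lt_one hβ2_pos).2 hβ12
  set m := ∑ τ ∈ Finset.range t, β1 ^ τ * (1 - β1) * g τ with hm
  set v := ∑ τ ∈ Finset.range t, β2 ^ τ * (1 - β2) * g τ ^ 2 with hv
  set C := (1 - β1) ^ 2 / ((1 - β2) * (1 - r)) with hC
  have hv_nonneg : 0 ≤ v := by
    apply Finset.sum_nonneg
    intro i _
    have h1 : (0:ℝ) ≤ 1 - β2 := by linarith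
    positivity
  have hC_nonneg : 0 ≤ C := by
    exact div_nonneg (sq_nonneg _) (mul_nonneg (by linarith) (by linarith))
  -- Cauchy-Schwarz
  have key : m ^ 2 ≤ C * v := by
    have hcs := Finset.sum_mul_sq_le_sq_mul_sq (Finset.range t)
      (fun τ => (1 - β1) * (β1 ^ τ / Real.sqrt (β2 ^ τ)))
      (fun τ => Real.sqrt (β2 ^ τ) * g τ)
    have hsq : ∀ τ : ℕ, Real.sqrt (β2 ^ τ) ^ 2 = β2 ^ τ := fun τ =>
      Real.sq_sqrt (pow_nonneg hβ2_pos.le τ)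
    have hsqpos : ∀ τ : ℕ, 0 < Real.sqrt (β2 ^ τ) := fun τ =>
      Real.sqrt_pos.2 (pow_pos hβ2_pos τ)
    have hm_eq : m = ∑ τ ∈ Finset.range t,
        ((1 - β1) * (β1 ^ τ / Real.sqrt (β2 ^ τ))) * (Real.sqrt (β2 ^ τ) * g τ) := by
      apply Finset.sum_congr rfl
      intro τ _
      field_simp
    have hA : ∑ τ ∈ Finset.range t, ((1 - β1) * (β1 ^ τ / Real.sqrt (β2 ^ τ))) ^ 2
        = (1 - β1) ^ 2 * ∑ τ ∈ Finset.range t, r ^ τ := by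
      rw [Finset.mul_sum]
      apply Finset.sum_congr rfl
      intro τ _
      rw [mul_pow, div_pow, hsq τ, hr_def, div_pow, pow_right_comm]
    have hB : ∑ τ ∈ Finset.range t, (Real.sqrt (β2 ^ τ) * g τ) ^ 2
        = ∑ τ ∈ Finset.range t, β2 ^ τ * g τ ^ 2 := by
      apply Finset.sum_congr rfl
      intro τ _
      rw [mul_pow, hsq τ]
    rw [← hm_eq, hA, hB] at hcs
    -- geometric sum bound
    have hgeom : ∑ τ ∈ Finset.range t, r ^ τ ≤ 1 / (1 - r) := by
      have h1 := geom_sum_mul r t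
      rw [le_div_iff₀ (by linarith : (0:ℝ) < 1 - r)]
      have h2 : 0 ≤ r ^ t := pow_nonneg hr_nonneg t
      nlinarith
    have hv_eq : ∑ τ ∈ Finset.range t, β2 ^ τ * g τ ^ 2 = v / (1 - β2) := by
      rw [hv, eq_div_iff (by linarith : (1:ℝ) - β2 ≠ 0), Finset.sum_mul]
      apply Finset.sum_congr rfl
      intro τ _
      ring
    rw [hv_eq] at hcs
    have hvb : 0 ≤ v / (1 - β2) := div_nonneg hv_nonneg (by linarith)
    calc m ^ 2 ≤ (1 - β1) ^ 2 * (∑ τ ∈ Finset.range t, r ^ τ) * (v / (1 - β2)) := hcs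
      _ ≤ (1 - β1) ^ 2 * (1 / (1 - r)) * (v / (1 - β2)) := by
          apply mul_le_mul_of_nonneg_right _ hvb
          exact mul_le_mul_of_nonneg_left hgeom (sq_nonneg _)
      _ = C * v := by
          rw [hC]
          field_simp
  refine ⟨key, ?_⟩
  intro ε hε
  have hden : 0 < Real.sqrt v + ε := by positivity
  rw [div_le_iff₀ hden]
  have h1 : |m| ≤ Real.sqrt C * Real.sqrt v := by
    have : |m| = Real.sqrt (m ^ 2) := (Real.sqrt_sq_eq_abs m).symm
    rw [this, ← Real.sqrt_mul hC_nonneg]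
    exact Real.sqrt_le_sqrt key
  have h2 : Real.sqrt C * Real.sqrt v ≤ Real.sqrt C * (Real.sqrt v + ε) := by
    apply mul_le_mul_of_nonneg_left (by linarith) (Real.sqrt_nonneg _)
  linarith
end

section
/- Fix weights W, j ∈ {−1,1}, r ∈ {1,…,m}, λ ≥ 0, η > 0, and a batch I ⊆ {1,…,n} of size B ≥ 1, and let g = (1/B) Σ_{i∈I} ∇_{w_{j,r}} L_i(W) + λ·w_{j,r}. Define the SignSGD update w'_{j,r} = w_{j,r} − η·sgn(g), with sgn applied coordinatewise. Then ⟨w'_{j,r}, j·v⟩ = ⟨w_{j,r}, j·v⟩ + j·η·sgn( Σ_{i∈I} y_i ℓ_{j,i} [ σ'(⟨w_{j,r}, y_i·v⟩) − α σ'(⟨w_{j,r}, ξ_i⟩) ] − B λ w_{j,r}[1] ). -/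
open scoped RealInnerProductSpace

noncomputable section SignSGDFeature

/-- Derivative of the polynomial ReLU activation `σ(z) = (max z 0)^q`. -/
def actD (q : ℕ) (z : ℝ) : ℝ := (q : ℝ) * (max z 0) ^ (q - 1)

/-- Output `F_j(W, x)` of the two-layer CNN on the input with patches `x₁, x₂`. -/
def cnnOut (q : ℕ) {d m : ℕ} (W : ℝ → Fin m → EuclideanSpace ℝ (Fin d))
    (j : ℝ) (x1 x2 : EuclideanSpace ℝ (Fin d)) : ℝ :=
  ∑ r : Fin m, ((max ⟪W j r, x1⟫ 0) ^ q + (max ⟪W j r, x2⟫ 0) ^ q)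

/-- Cross-entropy loss of the CNN on a sample with label `y` and patches `x₁, x₂`. -/
def cnnLoss (q : ℕ) {d m : ℕ} (W : ℝ → Fin m → EuclideanSpace ℝ (Fin d))
    (y : ℝ) (x1 x2 : EuclideanSpace ℝ (Fin d)) : ℝ :=
  -Real.log (Real.exp (cnnOut q W y x1 x2) /
    (Real.exp (cnnOut q W 1 x1 x2) + Real.exp (cnnOut q W (-1) x1 x2)))

/-- The quantity `ℓ_j = 𝟙[y = j] − exp(F_j)/(exp F₁ + exp F₋₁)` for a sample. -/
def ellC (q : ℕ) {d m : ℕ} (W : ℝ → Fin m → EuclideanSpace ℝ (Fin d))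
    (j y : ℝ) (x1 x2 : EuclideanSpace ℝ (Fin d)) : ℝ :=
  (if y = j then (1 : ℝ) else 0) - Real.exp (cnnOut q W j x1 x2) /
    (Real.exp (cnnOut q W 1 x1 x2) + Real.exp (cnnOut q W (-1) x1 x2))

/-- Replace the filter `w_{j,r}` of `W` by `w`, keeping all other filters fixed. -/
def updW {d m : ℕ} (W : ℝ → Fin m → EuclideanSpace ℝ (Fin d)) (j : ℝ) (r : Fin m)
    (w : EuclideanSpace ℝ (Fin d)) : ℝ → Fin m → EuclideanSpace ℝ (Fin d) :=
  Function.update W j (Function.update (W j) r w)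

/-- The coordinatewise sign of a vector. -/
def signVec {d : ℕ} (g : EuclideanSpace ℝ (Fin d)) : EuclideanSpace ℝ (Fin d) :=
  WithLp.toLp 2 (fun k => Real.sign (g k))

lemma maxpow_eq (q : ℕ) (hq : 2 ≤ q) (t : ℝ) : (max t 0)^q = t * (max t 0)^(q-1) := by
  rcases le_or_gt t 0 with h | h
  · rw [max_eq_right h]
    rw [zero_pow (by omega), zero_pow (by omega), mul_zero]
  · rw [max_eq_left h.le]
    rw [← pow_succ']
    congr 1; omega

lemma hasDerivAt_maxpow (q : ℕ) (hq : 2 ≤ q) (t : ℝ) :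
    HasDerivAt (fun z : ℝ => (max z 0)^q) (actD q t) t := by
  rcases lt_trichotomy t 0 with h | h | h
  · have h1 : HasDerivAt (fun _ : ℝ => (0:ℝ)) 0 t := hasDerivAt_const t 0
    have h2 : (fun z : ℝ => (max z 0)^q) =ᶠ[nhds t] (fun _ : ℝ => (0:ℝ)) := by
      filter_upwards [eventually_lt_nhds h] with z hz
      rw [max_eq_right hz.le, zero_pow (by omega)]
    have := h1.congr_of_eventuallyEq h2
    convert this using 1
    on_goal 3 => rw [actD, max_eq_right h.le, zero_pow (by omega), mul_zero]
    all_goals rfl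
  · subst h
    rw [hasDerivAt_iff_tendsto_slope]
    have heq : (fun z : ℝ => slope (fun z : ℝ => (max z 0)^q) 0 z) =ᶠ[nhdsWithin 0 {(0:ℝ)}ᶜ]
        (fun z : ℝ => (max z 0)^(q-1)) := by
      filter_upwards [self_mem_nhdsWithin] with z hz
      simp only [slope_def_field, max_self, zero_pow (show q ≠ 0 by omega), sub_zero]
      have hz' : (z:ℝ) ≠ 0 := by simpa using hz
      rw [maxpow_eq q hq z, mul_comm z, mul_div_assoc, div_self hz', mul_one]
    rw [Filter.tendsto_congr' heq]
    have hc : ContinuousAt (fun z : ℝ => (max z 0)^(q-1)) 0 :=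
      ((continuous_id.max continuous_const).pow (q-1)).continuousAt
    have := hc.continuousWithinAt (s := {(0:ℝ)}ᶜ)
    have h0 : actD q 0 = 0 := by
      rw [actD, max_self, zero_pow (by omega), mul_zero]
    rw [h0]
    simpa [ContinuousWithinAt, max_self, zero_pow (show q - 1 ≠ 0 by omega)] using this
  · have h1 := hasDerivAt_pow q t
    have h2 : (fun z : ℝ => (max z 0)^q) =ᶠ[nhds t] (fun z : ℝ => z^q) := by
      filter_upwards [eventually_gt_nhds h] with z hz
      rw [max_eq_left hz.le]
    have := h1.congr_of_eventuallyEq h2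
    convert this using 1
    on_goal 3 => rw [actD, max_eq_left h.le]
    all_goals rfl

section Grad
variable {d m : ℕ}
local notation "E" => EuclideanSpace ℝ (Fin d)

lemma updW_self (W : ℝ → Fin m → E) (j : ℝ) (r : Fin m) : updW W j r (W j r) = W := by
  unfold updW; rw [Function.update_eq_self, Function.update_eq_self]

lemma cnnOut_updW_ne (q : ℕ) (W : ℝ → Fin m → E) (j : ℝ) (r : Fin m) (w : E) (j' : ℝ)
    (h : j' ≠ j) (x1 x2 : E) :
    cnnOut q (updW W j r w) j' x1 x2 = cnnOut q W j' x1 x2 := by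
  unfold cnnOut updW; rw [Function.update_of_ne h]

lemma cnnOut_updW_eq (q : ℕ) (W : ℝ → Fin m → E) (j : ℝ) (r : Fin m) (w : E) (x1 x2 : E) :
    cnnOut q (updW W j r w) j x1 x2 =
      (((max ⟪w, x1⟫ 0) ^ q + (max ⟪w, x2⟫ 0) ^ q) : ℝ) +
      ∑ r' ∈ Finset.univ.erase r, ((max ⟪W j r', x1⟫ 0) ^ q + (max ⟪W j r', x2⟫ 0) ^ q) := by
  unfold cnnOut updW
  rw [Function.update_self]
  rw [← Finset.add_sum_erase _ _ (Finset.mem_univ r)]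
  congr 1
  · rw [Function.update_self]
  · exact Finset.sum_congr rfl fun r' hr' => by
      rw [Function.update_of_ne (Finset.ne_of_mem_erase hr')]

lemma cnnLoss_eq (q : ℕ) (W' : ℝ → Fin m → E) (yy : ℝ) (x1 x2 : E) :
    cnnLoss q W' yy x1 x2 = -cnnOut q W' yy x1 x2 +
      Real.log (Real.exp (cnnOut q W' 1 x1 x2) + Real.exp (cnnOut q W' (-1) x1 x2)) := by
  unfold cnnLoss
  rw [Real.log_div (Real.exp_ne_zero _) (by positivity), Real.log_exp]
  ring

lemma hasFDerivAt_maxpow_inner (q : ℕ) (hq : 2 ≤ q) (a w0 : E) :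
    HasFDerivAt (fun w : E => (max ⟪w, a⟫ 0) ^ q)
      (actD q ⟪w0, a⟫ • (innerSL ℝ a)) w0 := by
  have hlin : HasFDerivAt (fun w : E => ⟪w, a⟫) (innerSL ℝ a) w0 := by
    have he : (fun w : E => ⟪w, a⟫) = fun w : E => (innerSL ℝ a) w := by
      funext w; rw [innerSL_apply_apply]; exact real_inner_comm a w
    rw [he]
    exact (innerSL ℝ a).hasFDerivAt
  have := (hasDerivAt_maxpow q hq ⟪w0, a⟫).comp_hasFDerivAt w0 hlin
  exact this

lemma hasGradientAt_cnnLoss (q : ℕ) (hq : 2 ≤ q)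
    (W : ℝ → Fin m → E) (j : ℝ) (hj : j = 1 ∨ j = -1) (r : Fin m)
    (yy : ℝ) (hyy : yy = 1 ∨ yy = -1) (x1 x2 : E) :
    HasGradientAt (fun w : E => cnnLoss q (updW W j r w) yy x1 x2)
      ((-(ellC q W j yy x1 x2)) •
        (actD q ⟪W j r, x1⟫ • x1 + actD q ⟪W j r, x2⟫ • x2)) (W j r) := by
  classical
  set w0 : E := W j r with hw0
  set K : ℝ := ∑ r' ∈ Finset.univ.erase r,
    ((max ⟪W j r', x1⟫ 0) ^ q + (max ⟪W j r', x2⟫ 0) ^ q) with hK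
  set K' : ℝ := cnnOut q W (-j) x1 x2 with hK'
  set h : E → ℝ := fun w => (max ⟪w, x1⟫ 0) ^ q + (max ⟪w, x2⟫ 0) ^ q with hh
  set u0 : ℝ := h w0 with hu0
  have hjne : (-j) ≠ j := by rcases hj with hj | hj <;> rw [hj] <;> norm_num
  -- the loss as a function of u = h w
  set ρ : ℝ → ℝ := fun u => -(if yy = j then K + u else K') +
    Real.log (Real.exp (K + u) + Real.exp K') with hρ
  have key : ∀ w : E, cnnLoss q (updW W j r w) yy x1 x2 = ρ (h w) := by
    intro w
    rw [cnnLoss_eq]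
    have hFj : cnnOut q (updW W j r w) j x1 x2 = K + h w := by
      rw [cnnOut_updW_eq]; ring
    have hFm : cnnOut q (updW W j r w) (-j) x1 x2 = K' := by
      rw [cnnOut_updW_ne _ _ _ _ _ _ hjne]
    have hyyout : cnnOut q (updW W j r w) yy x1 x2 = if yy = j then K + h w else K' := by
      by_cases hc : yy = j
      · rw [if_pos hc, hc, hFj]
      · rw [if_neg hc]
        have : yy = -j := by
          rcases hj with hj | hj <;> rcases hyy with hyy | hyy <;>
            simp_all <;> norm_num
        rw [this, hFm]
    have hsum : Real.exp (cnnOut q (updW W j r w) 1 x1 x2) +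
        Real.exp (cnnOut q (updW W j r w) (-1) x1 x2) =
        Real.exp (K + h w) + Real.exp K' := by
      rcases hj with hj | hj
      · rw [← hj, hFj, hFm]
      · have e2 : (-1 : ℝ) = j := by rw [hj]
        have e1 : (1 : ℝ) = -j := by rw [hj]; norm_num
        rw [e2, e1, hFj, hFm, add_comm]
    rw [hyyout, hsum]
  -- derivative of ρ
  have hpos : (0:ℝ) < Real.exp (K + u0) + Real.exp K' := by positivity
  set c : ℝ := -(if yy = j then (1:ℝ) else 0) +
    Real.exp (K + u0) / (Real.exp (K + u0) + Real.exp K') with hc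
  have hρ' : HasDerivAt ρ c u0 := by
    have h1 : HasDerivAt (fun u : ℝ => K + u) 1 u0 := (hasDerivAt_id u0).const_add K
    have h2 : HasDerivAt (fun u : ℝ => Real.exp (K + u)) (Real.exp (K + u0)) u0 := by
      simpa using h1.exp
    have h3 : HasDerivAt (fun u : ℝ => Real.exp (K + u) + Real.exp K')
        (Real.exp (K + u0)) u0 := by
      simpa using h2.add_const (Real.exp K')
    have h4 : HasDerivAt (fun u : ℝ => Real.log (Real.exp (K + u) + Real.exp K'))
        (Real.exp (K + u0) / (Real.exp (K + u0) + Real.exp K')) u0 := h3.log hpos.ne'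
    have h5 : HasDerivAt (fun u : ℝ => -(if yy = j then K + u else K'))
        (-(if yy = j then (1:ℝ) else 0)) u0 := by
      by_cases hcc : yy = j
      · have e : (fun u : ℝ => -(if yy = j then K + u else K')) = fun u => -(K + u) := by
          funext u; rw [if_pos hcc]
        rw [e, if_pos hcc]; exact h1.neg
      · simpa [hcc] using hasDerivAt_const u0 (-K')
    exact h5.add h4
  -- derivative of h
  set c1 : ℝ := actD q ⟪w0, x1⟫ with hc1
  set c2 : ℝ := actD q ⟪w0, x2⟫ with hc2
  have hhD : HasFDerivAt h (c1 • (innerSL ℝ x1) + c2 • (innerSL ℝ x2)) w0 :=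
    (hasFDerivAt_maxpow_inner q hq x1 w0).add (hasFDerivAt_maxpow_inner q hq x2 w0)
  -- compose
  have hcomp : HasFDerivAt (fun w : E => cnnLoss q (updW W j r w) yy x1 x2)
      (c • (c1 • (innerSL ℝ x1) + c2 • (innerSL ℝ x2))) w0 := by
    have := hρ'.comp_hasFDerivAt w0 hhD
    have hfe : (fun w : E => cnnLoss q (updW W j r w) yy x1 x2) = ρ ∘ h := by
      funext w; exact key w
    rw [hfe]
    exact this
  -- identify the scalar with -ellC
  have hscal : c = -(ellC q W j yy x1 x2) := by
    have hKu : K + u0 = cnnOut q W j x1 x2 := by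
      conv_rhs => rw [← updW_self W j r]
      rw [cnnOut_updW_eq]; ring
    have hden : Real.exp (cnnOut q W 1 x1 x2) + Real.exp (cnnOut q W (-1) x1 x2) =
        Real.exp (K + u0) + Real.exp K' := by
      rw [hKu]
      rcases hj with hj | hj
      · rw [← hj, hK']
      · have e2 : (-1 : ℝ) = j := by rw [hj]
        have e1 : (1 : ℝ) = -j := by rw [hj]; norm_num
        rw [e2, e1, hK', add_comm]
    rw [ellC, hden, hc, hKu]
    ring
  -- convert to gradient
  rw [hasGradientAt_iff_hasFDerivAt]
  have htd : (InnerProductSpace.toDual ℝ E)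
      ((-(ellC q W j yy x1 x2)) • (actD q ⟪W j r, x1⟫ • x1 + actD q ⟪W j r, x2⟫ • x2)) =
      c • (c1 • (innerSL ℝ x1) + c2 • (innerSL ℝ x2)) := by
    apply ContinuousLinearMap.ext
    intro v
    rw [InnerProductSpace.toDual_apply_apply, hscal]
    simp only [ContinuousLinearMap.add_apply, ContinuousLinearMap.smul_apply, innerSL_apply_apply,
      smul_eq_mul, real_inner_smul_left, inner_add_left]
    rfl
  rw [htd]
  exact hcomp
end Grad

lemma sign_pos_mul {c x : ℝ} (hc : 0 < c) : Real.sign (c * x) = Real.sign x := by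
  rcases lt_trichotomy x 0 with h | h | h
  · rw [Real.sign_of_neg h, Real.sign_of_neg (mul_neg_of_pos_of_neg hc h)]
  · simp [h]
  · rw [Real.sign_of_pos h, Real.sign_of_pos (mul_pos hc h)]


/-- effect of one SignSGD step
`w' = w_{j,r} − η·sgn(g)`, `g = (1/B) Σ_{i∈I} ∇_{w_{j,r}} L_i(W) + λ·w_{j,r}`, on the
feature-learning quantity `⟨w_{j,r}, j·v⟩`. -/
theorem signsgd_feature_learning_update
    (d m n q : ℕ) [NeZero d] (hd : 2 ≤ d) (hm : 1 ≤ m) (hq : 3 ≤ q)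
    (α : ℝ) (hα0 : 0 < α) (hα1 : α < 1)
    (y : Fin n → ℝ) (hy : ∀ i, y i = 1 ∨ y i = -1)
    (Bs : Fin n → Finset (Fin d))
    (hB1 : ∀ i, (0 : Fin d) ∉ Bs i)
    (hBdisj : ∀ i i', i ≠ i' → Disjoint (Bs i) (Bs i'))
    (ξ : Fin n → EuclideanSpace ℝ (Fin d))
    (hξ1 : ∀ i, ξ i 0 = -α * y i)
    (hξ0 : ∀ i, ∀ k : Fin d, k ≠ 0 → k ∉ Bs i → ξ i k = 0)
    (W : ℝ → Fin m → EuclideanSpace ℝ (Fin d))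
    (j : ℝ) (hj : j = 1 ∨ j = -1) (r : Fin m)
    (lam : ℝ) (hlam : 0 ≤ lam) (η : ℝ) (hη : 0 < η)
    (I : Finset (Fin n)) (hI : 1 ≤ I.card) :
    let v : EuclideanSpace ℝ (Fin d) := EuclideanSpace.single 0 1
    let g : EuclideanSpace ℝ (Fin d) :=
      (I.card : ℝ)⁻¹ •
        (∑ i ∈ I, gradient (fun w => cnnLoss q (updW W j r w) (y i) (y i • v) (ξ i)) (W j r))
      + lam • W j r
    let w' : EuclideanSpace ℝ (Fin d) := W j r - η • signVec g
    ⟪w', j • v⟫ = ⟪W j r, j • v⟫ + j * η * Real.sign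
      ((∑ i ∈ I, y i * ellC q W j (y i) (y i • v) (ξ i) *
          (actD q ⟪W j r, y i • v⟫ - α * actD q ⟪W j r, ξ i⟫))
        - I.card * lam * W j r 0) := by
  intro v g w'
  have hv : v = EuclideanSpace.single 0 1 := rfl
  have hB : (0:ℝ) < (I.card : ℝ) := by exact_mod_cast hI
  set G : Fin n → EuclideanSpace ℝ (Fin d) := fun i =>
    (-(ellC q W j (y i) (y i • v) (ξ i))) •
      (actD q ⟪W j r, y i • v⟫ • (y i • v) + actD q ⟪W j r, ξ i⟫ • ξ i) with hG
  have hg' : g = (I.card : ℝ)⁻¹ • (∑ i ∈ I, G i) + lam • W j r := by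
    have h0 : g = (I.card : ℝ)⁻¹ •
        (∑ i ∈ I, gradient (fun w => cnnLoss q (updW W j r w) (y i) (y i • v) (ξ i)) (W j r))
        + lam • W j r := rfl
    rw [h0, Finset.sum_congr rfl (fun i _ =>
      (hasGradientAt_cnnLoss q (by omega) W j hj r (y i) (hy i) (y i • v) (ξ i)).gradient)]
  have hGi : ∀ i, G i 0 = -(y i * ellC q W j (y i) (y i • v) (ξ i) *
      (actD q ⟪W j r, y i • v⟫ - α * actD q ⟪W j r, ξ i⟫)) := by
    intro i
    have hv0 : v 0 = 1 := by rw [hv]; simp [EuclideanSpace.single_apply]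
    simp only [hG, PiLp.smul_apply, PiLp.add_apply, smul_eq_mul, hv0, hξ1 i]
    ring
  have hsum0 : (∑ i ∈ I, G i) 0 = ∑ i ∈ I, G i 0 := by
    rw [WithLp.ofLp_sum, Finset.sum_apply]
  set S : ℝ := (∑ i ∈ I, y i * ellC q W j (y i) (y i • v) (ξ i) *
      (actD q ⟪W j r, y i • v⟫ - α * actD q ⟪W j r, ξ i⟫)) with hS
  have hg0 : g 0 = (I.card : ℝ)⁻¹ * (-(S - I.card * lam * W j r 0)) := by
    have hBne : (I.card : ℝ) ≠ 0 := hB.ne'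
    rw [hg']
    have h1 : ((I.card : ℝ)⁻¹ • (∑ i ∈ I, G i) + lam • W j r) 0 =
        (I.card : ℝ)⁻¹ * ((∑ i ∈ I, G i) 0) + lam * (W j r 0) := rfl
    rw [h1, hsum0, Finset.sum_congr rfl (fun i _ => hGi i), Finset.sum_neg_distrib, ← hS,
      neg_sub, mul_sub, ← mul_assoc, ← mul_assoc, inv_mul_cancel₀ hBne, one_mul]
    ring
  have hsign : Real.sign (g 0) = -Real.sign (S - I.card * lam * W j r 0) := by
    rw [hg0, sign_pos_mul (inv_pos.mpr hB), Real.sign_neg]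
  have hw' : w' = W j r - η • signVec g := rfl
  have hinner : ⟪signVec g, j • v⟫ = j * Real.sign (g 0) := by
    rw [real_inner_smul_right, hv, EuclideanSpace.inner_single_right]
    simp [signVec]
  rw [hw', inner_sub_left, real_inner_smul_left, hinner, hsign]
  ring


end SignSGDFeature
end
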